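/- For the standard structural set, the operator identity G[e^{⟨·,v⟩}f](x) = e^{⟨x,v⟩}·( G[f](x) - (x_vec/2)(x_vec·v + v·x_vec)·f(x) ) holds for all C¹ functions f : Ω → ℍ and all x ∈ Ω, where G[f] = ‖x_vec‖² ∂₀f + x_vec Σ_{k=1}³ x_k ∂_k f and x_vec denotes the vector (imaginary) part of x. -/

import Mathlib

open Quaternion

noncomputable section

/-- Real Euclidean inner product on the quaternions (sum of products of components). -/
def qinner (q v : ℍ[ℝ]) : ℝ :=
  q.re * v.re + q.imI * v.imI + q.imJ * v.imJ + q.imK * v.imK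

/-- The sphere of purely imaginary unit quaternions. -/
def Sph2 : Set ℍ[ℝ] := {i | i.re = 0 ∧ ‖i‖ = 1}

/-- The complex slice plane `ℂ(i) = {x + y i : x, y ∈ ℝ}`. -/
def slicePlane (i : ℍ[ℝ]) : Set ℍ[ℝ] := {z | ∃ x y : ℝ, z = (x : ℍ[ℝ]) + y • i}

/-- The slice Cauchy–Riemann operator `∂/∂ z̄_i = (1/2)(∂/∂x + i ∂/∂y)`. -/
def dbar (i : ℍ[ℝ]) (f : ℍ[ℝ] → ℍ[ℝ]) (q : ℍ[ℝ]) : ℍ[ℝ] :=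
  (1 / 2 : ℝ) • (fderiv ℝ f q 1 + i * fderiv ℝ f q i)

/-- Slice regular functions on `Ω`. -/
def SliceRegularOn (f : ℍ[ℝ] → ℍ[ℝ]) (Ω : Set ℍ[ℝ]) : Prop :=
  ContDiffOn ℝ 1 f Ω ∧ ∀ i ∈ Sph2, ∀ q ∈ Ω ∩ slicePlane i, dbar i f q = 0

/-- `v`-slice regular functions on `Ω`. -/
def VSliceRegularOn (v : ℍ[ℝ]) (f : ℍ[ℝ] → ℍ[ℝ]) (Ω : Set ℍ[ℝ]) : Prop :=
  ContDiffOn ℝ 1 f Ω ∧ ∀ i ∈ Sph2, ∀ q ∈ Ω ∩ slicePlane i,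
    dbar i f q + (1 / 4 : ℝ) • ((v - i * v * i) * f q) = 0

/-- Axially symmetric slice domain. -/
def AxSymSliceDomain (Ω : Set ℍ[ℝ]) : Prop :=
  IsOpen Ω ∧ IsConnected Ω ∧ (∃ r : ℝ, (r : ℍ[ℝ]) ∈ Ω) ∧
  (∀ i ∈ Sph2, IsConnected (Ω ∩ slicePlane i)) ∧
  (∀ (x y : ℝ), ∀ i ∈ Sph2, (x : ℍ[ℝ]) + y • i ∈ Ω → ∀ j ∈ Sph2, (x : ℍ[ℝ]) + y • j ∈ Ω)

/-- Vector (imaginary) part of a quaternion. -/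
def vecPart (x : ℍ[ℝ]) : ℍ[ℝ] := x - (x.re : ℍ[ℝ])

def qe1 : ℍ[ℝ] := ⟨0, 1, 0, 0⟩
def qe2 : ℍ[ℝ] := ⟨0, 0, 1, 0⟩
def qe3 : ℍ[ℝ] := ⟨0, 0, 0, 1⟩

/-- The global operator `G[f](x) = ‖x_vec‖² ∂₀ f + x_vec (x₁ ∂₁ f + x₂ ∂₂ f + x₃ ∂₃ f)`. -/
def Gop (f : ℍ[ℝ] → ℍ[ℝ]) (x : ℍ[ℝ]) : ℍ[ℝ] :=
  (‖vecPart x‖ ^ 2) • fderiv ℝ f x 1 +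
    vecPart x *
      (x.imI • fderiv ℝ f x qe1 + x.imJ • fderiv ℝ f x qe2 + x.imK • fderiv ℝ f x qe3)


lemma key (x v : ℍ[ℝ]) :
    (((x.imI^2 + x.imJ^2 + x.imK^2) * v.re : ℝ) : ℍ[ℝ]) +
      (x.imI*v.imI + x.imJ*v.imJ + x.imK*v.imK) • vecPart x
    = -((1/2 : ℝ) • (vecPart x * (vecPart x * v + v * vecPart x))) := by
  ext <;>
    simp [vecPart, Quaternion.re_mul, Quaternion.imI_mul, Quaternion.imJ_mul,
      Quaternion.imK_mul, ← Quaternion.coe_pow] <;> ring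

lemma normsq_vec (x : ℍ[ℝ]) : ‖vecPart x‖^2 = x.imI^2 + x.imJ^2 + x.imK^2 := by
  rw [sq, ← Quaternion.normSq_eq_norm_mul_self, Quaternion.normSq_def']
  simp [vecPart]

lemma qinner_eq (q v : ℍ[ℝ]) : qinner q v = inner (𝕜 := ℝ) v q := by
  simp [qinner, Quaternion.inner_def, Quaternion.re_mul]; ring

/-- `G[e^{⟨·,v⟩} f](x) = e^{⟨x,v⟩} (G[f](x) - (x_vec/2)(x_vec v + v x_vec) f(x))`. -/
theorem stmt10 (Ω : Set ℍ[ℝ]) (hΩ : IsOpen Ω) (v : ℍ[ℝ])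
    (f : ℍ[ℝ] → ℍ[ℝ]) (hf : ContDiffOn ℝ 1 f Ω) (x : ℍ[ℝ]) (hx : x ∈ Ω) :
    Gop (fun q => Real.exp (qinner q v) • f q) x =
      Real.exp (qinner x v) •
        (Gop f x - (1 / 2 : ℝ) • (vecPart x * ((vecPart x * v + v * vecPart x) * f x))) := by
  have hfd : DifferentiableAt ℝ f x :=
    ((hf.contDiffAt (hΩ.mem_nhds hx)).differentiableAt one_ne_zero)
  set L : ℍ[ℝ] →L[ℝ] ℝ := innerSL ℝ v with hLdef
  have hLapp : ∀ q, L q = qinner q v := by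
    intro q; rw [qinner_eq]; rfl
  set E : ℝ := Real.exp (qinner x v) with hE
  have hexp : HasFDerivAt (fun q => Real.exp (qinner q v)) (E • L) x := by
    have h1 : HasFDerivAt (fun q => Real.exp (L q)) (Real.exp (L x) • L) x :=
      (Real.hasDerivAt_exp (L x)).comp_hasFDerivAt x L.hasFDerivAt
    simpa [hLapp] using h1
  have hprod : HasFDerivAt (fun q => Real.exp (qinner q v) • f q)
      (E • fderiv ℝ f x + (E • L).smulRight (f x)) x := by
    exact hexp.smul hfd.hasFDerivAt
  have hfder := hprod.fderiv
  have hL1 : L 1 = v.re := by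
    rw [hLapp]; simp [qinner]
  have hLe1 : L qe1 = v.imI := by rw [hLapp]; simp [qinner, qe1]
  have hLe2 : L qe2 = v.imJ := by rw [hLapp]; simp [qinner, qe2]
  have hLe3 : L qe3 = v.imK := by rw [hLapp]; simp [qinner, qe3]
  have hkey := key x v
  have hrhs : -((1/2 : ℝ) • (vecPart x * ((vecPart x * v + v * vecPart x) * f x)))
      = (((x.imI^2 + x.imJ^2 + x.imK^2) * v.re : ℝ) : ℍ[ℝ]) * f x
          + ((x.imI*v.imI + x.imJ*v.imJ + x.imK*v.imK) • vecPart x) * f x := by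
    rw [← mul_assoc, ← smul_mul_assoc, ← neg_mul, ← hkey, add_mul]
  rw [Gop, Gop, hfder, sub_eq_add_neg, hrhs]
  simp only [ContinuousLinearMap.add_apply, ContinuousLinearMap.smul_apply,
    ContinuousLinearMap.smulRight_apply, hL1, hLe1, hLe2, hLe3,
    Quaternion.coe_mul_eq_smul, smul_mul_assoc, normsq_vec]
  simp only [smul_add, mul_add, mul_smul_comm, smul_smul]
  match_scalars
  all_goals (try simp only [smul_eq_mul])
  all_goals ring
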